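/- Let C be a 2-Calabi-Yau triangulated category with a rigid object E (Ext^1(E,E) = 0), and let X be the full subcategory of objects X with Hom(E, X[1]) = 0. Then (X, X) is an (add E)-mutation pair in C. -/

import Mathlib

open CategoryTheory Limits Pretriangulated

universe v u

variable {C : Type u} [Category.{v} C]

/-- `f : X ⟶ Y` is `S`-monic. -/
def SMonicT (S : Set C) {X Y : C} (f : X ⟶ Y) : Prop :=
  ∀ D ∈ S, ∀ u : X ⟶ D, ∃ v : Y ⟶ D, f ≫ v = u

/-- `g : X ⟶ Y` is `S`-epic. -/
def SEpicT (S : Set C) {X Y : C} (g : X ⟶ Y) : Prop :=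
  ∀ D ∈ S, ∀ u : D ⟶ Y, ∃ v : D ⟶ X, v ≫ g = u

section Tri

variable [HasZeroObject C] [Preadditive C] [HasShift C ℤ]
  [∀ n : ℤ, (shiftFunctor C n).Additive] [Pretriangulated C]

/-- `μ(𝒴; 𝒟)`: objects `X` in `𝒟` or left ends of triangles `X → D → Y → X[1]`
with `Y ∈ 𝒴`, `D ∈ 𝒟`, the maps being a left `𝒟`-approximation and a right
`𝒟`-approximation respectively. -/
def muT (𝒴 𝒟 : Set C) : Set C :=
  {X | X ∈ 𝒟 ∨ ∃ (D Y : C) (f : X ⟶ D) (g : D ⟶ Y) (h : Y ⟶ X⟦(1 : ℤ)⟧),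
    (Triangle.mk f g h ∈ distTriang C) ∧ D ∈ 𝒟 ∧ Y ∈ 𝒴 ∧ SMonicT 𝒟 f ∧ SEpicT 𝒟 g}

/-- `μ⁻¹(𝒳; 𝒟)`: objects `Y` in `𝒟` or third terms of triangles `X → D → Y → X[1]`
with `X ∈ 𝒳`, `D ∈ 𝒟`, the maps being left/right `𝒟`-approximations. -/
def muInvT (𝒳 𝒟 : Set C) : Set C :=
  {Y | Y ∈ 𝒟 ∨ ∃ (X D : C) (f : X ⟶ D) (g : D ⟶ Y) (h : Y ⟶ X⟦(1 : ℤ)⟧),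
    (Triangle.mk f g h ∈ distTriang C) ∧ X ∈ 𝒳 ∧ D ∈ 𝒟 ∧ SMonicT 𝒟 f ∧ SEpicT 𝒟 g}

end Tri

-- If `V ≅ W*` and `W ≅ V*` then `V` is finite dimensional (Erdős–Kaplansky).
open Cardinal in
lemma finDim_of_dual_pair_aux (k : Type*) [Field k] {V W : Type v}
    [AddCommGroup V] [Module k V] [AddCommGroup W] [Module k W]
    (e1 : V ≃ₗ[k] Module.Dual k W) (e2 : W ≃ₗ[k] Module.Dual k V) :
    FiniteDimensional k V := by
  by_contra hc
  have h1 : ℵ₀ ≤ Module.rank k V := by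
    by_contra h
    exact hc (Module.rank_lt_aleph0_iff.mp (not_le.mp h))
  have step : ∀ {A B : Type v} [AddCommGroup A] [Module k A] [AddCommGroup B] [Module k B],
      (B ≃ₗ[k] Module.Dual k A) → ℵ₀ ≤ Module.rank k A →
        Module.rank k A < Module.rank k B := by
    intro A B _ _ _ _ e hA
    have hd := lift_rank_lt_rank_dual (K := k) (V := A) hA
    have he := e.lift_rank_eq
    have hd2 : Cardinal.lift.{v} (Cardinal.lift (Module.rank k A))
        < Cardinal.lift.{v} (Module.rank k (Module.Dual k A)) := Cardinal.lift_lt.mpr hd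
    rw [← he] at hd2
    rw [Cardinal.lift_lift] at hd2
    exact Cardinal.lift_lt.mp hd2
  have h2 := step e2 h1
  have h3 : ℵ₀ ≤ Module.rank k W := h1.trans h2.le
  have h4 := step e1 h3
  exact lt_asymm h2 h4

/-- Example 3 of Section 3.5: in a 2-Calabi–Yau triangulated category `C` with a
rigid object `E`, the subcategory `𝒳 = {X | Hom(E, X[1]) = 0}` satisfies that
`(𝒳, 𝒳)` is an `add E`-mutation pair. -/
theorem twoCY_rigid_mutation_pair (k : Type*) [Field k]
    {C : Type u} [Category.{v} C] [Preadditive C] [CategoryTheory.Linear k C]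
    [HasZeroObject C] [HasShift C ℤ] [∀ n : ℤ, (shiftFunctor C n).Additive]
    [Pretriangulated C] [HasFiniteBiproducts C]
    -- 2-Calabi-Yau duality `Hom(A, B[1]) ≅ D Hom(B, A[1])`, natural in both variables
    (cy : ∀ A B : C, (A ⟶ B⟦(1 : ℤ)⟧) ≃ₗ[k] Module.Dual k (B ⟶ A⟦(1 : ℤ)⟧))
    (cy_natA : ∀ {A' A B : C} (f : A' ⟶ A) (b : A ⟶ B⟦(1 : ℤ)⟧) (g : B ⟶ A'⟦(1 : ℤ)⟧),
      cy A' B (f ≫ b) g = cy A B b (g ≫ f⟦(1 : ℤ)⟧'))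
    (cy_natB : ∀ {A B B' : C} (h : B ⟶ B') (b : A ⟶ B⟦(1 : ℤ)⟧) (g : B' ⟶ A⟦(1 : ℤ)⟧),
      cy A B' (b ≫ h⟦(1 : ℤ)⟧') g = cy A B b (h ≫ g))
    -- a rigid object `E`
    (E : C) (hE : ∀ f : E ⟶ E⟦(1 : ℤ)⟧, f = 0) :
    muInvT {X : C | ∀ f : E ⟶ X⟦(1 : ℤ)⟧, f = 0}
        {X : C | ∃ (n : ℕ) (s : X ⟶ ⨁ (fun _ : Fin n => E))
          (r : (⨁ fun _ : Fin n => E) ⟶ X), s ≫ r = 𝟙 X}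
      = {X : C | ∀ f : E ⟶ X⟦(1 : ℤ)⟧, f = 0} ∧
    muT {X : C | ∀ f : E ⟶ X⟦(1 : ℤ)⟧, f = 0}
        {X : C | ∃ (n : ℕ) (s : X ⟶ ⨁ (fun _ : Fin n => E))
          (r : (⨁ fun _ : Fin n => E) ⟶ X), s ≫ r = 𝟙 X}
      = {X : C | ∀ f : E ⟶ X⟦(1 : ℤ)⟧, f = 0} := by
  -- maps out of an object of `add E` vanish whenever maps out of `E` vanish
  have hfromD : ∀ {T : C}, (∀ w : E ⟶ T, w = 0) → ∀ {D' : C},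
      (∃ (n : ℕ) (s : D' ⟶ ⨁ (fun _ : Fin n => E))
        (r : (⨁ fun _ : Fin n => E) ⟶ D'), s ≫ r = 𝟙 D') →
      ∀ u : D' ⟶ T, u = 0 := by
    rintro T hT D' ⟨n, s, r, hsr⟩ u
    have hr : r ≫ u = 0 := by
      apply biproduct.hom_ext'
      intro j
      rw [comp_zero]
      exact hT _
    calc u = (s ≫ r) ≫ u := by rw [hsr, Category.id_comp]
    _ = s ≫ (r ≫ u) := by rw [Category.assoc]
    _ = 0 := by rw [hr, comp_zero]
  -- transfer of vanishing through the Calabi-Yau duality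
  have hcy0 : ∀ {A B : C}, (∀ g : B ⟶ A⟦(1 : ℤ)⟧, g = 0) → ∀ b : A ⟶ B⟦(1 : ℤ)⟧, b = 0 := by
    intro A B h b
    have h0 : cy A B b = 0 := LinearMap.ext fun x => by rw [h x, map_zero, LinearMap.zero_apply]
    exact (LinearEquiv.map_eq_zero_iff _).mp h0
  have hDE1 : ∀ {D' : C},
      (∃ (n : ℕ) (s : D' ⟶ ⨁ (fun _ : Fin n => E))
        (r : (⨁ fun _ : Fin n => E) ⟶ D'), s ≫ r = 𝟙 D') →
      ∀ u : D' ⟶ E⟦(1 : ℤ)⟧, u = 0 := fun hD' => hfromD hE hD'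
  have hED1 : ∀ {D' : C},
      (∃ (n : ℕ) (s : D' ⟶ ⨁ (fun _ : Fin n => E))
        (r : (⨁ fun _ : Fin n => E) ⟶ D'), s ≫ r = 𝟙 D') →
      ∀ v : E ⟶ D'⟦(1 : ℤ)⟧, v = 0 := fun hD' => hcy0 (hDE1 hD')
  -- finite dimensionality of Hom spaces
  have hfin1 : ∀ A B : C, FiniteDimensional k (A ⟶ B⟦(1 : ℤ)⟧) :=
    fun A B => finDim_of_dual_pair_aux k (cy A B) (cy B A)
  have hfinHom : ∀ A B : C, FiniteDimensional k (A ⟶ B) := by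
    intro A B
    have := hfin1 A (B⟦(-1 : ℤ)⟧)
    let ι : (B⟦(-1 : ℤ)⟧)⟦(1 : ℤ)⟧ ≅ B := (shiftFunctorCompIsoId C (-1 : ℤ) (1 : ℤ) (by ring)).app B
    exact Module.Finite.of_surjective (Linear.rightComp k A ι.hom)
      (fun u => ⟨u ≫ ι.inv, by simp [Linear.rightComp]⟩)
  -- simple members of `add E`
  have hDD : ∀ n : ℕ, (⨁ fun _ : Fin n => E) ∈
      {X : C | ∃ (n : ℕ) (s : X ⟶ ⨁ (fun _ : Fin n => E))
        (r : (⨁ fun _ : Fin n => E) ⟶ X), s ≫ r = 𝟙 X} :=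
    fun n => ⟨n, 𝟙 _, 𝟙 _, Category.id_comp _⟩
  have hED : E ∈ {X : C | ∃ (n : ℕ) (s : X ⟶ ⨁ (fun _ : Fin n => E))
      (r : (⨁ fun _ : Fin n => E) ⟶ X), s ≫ r = 𝟙 X} :=
    ⟨1, biproduct.ι (fun _ : Fin 1 => E) 0, biproduct.π (fun _ : Fin 1 => E) 0,
      biproduct.ι_π_self (fun _ : Fin 1 => E) 0⟩
  -- left and right `add E`-approximations exist
  have leftApprox : ∀ X : C, ∃ (n : ℕ) (f : X ⟶ ⨁ fun _ : Fin n => E),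
      ∀ w : X ⟶ E, ∃ e : (⨁ fun _ : Fin n => E) ⟶ E, f ≫ e = w := by
    intro X
    have : FiniteDimensional k (X ⟶ E) := hfinHom X E
    let b := Module.finBasis k (X ⟶ E)
    refine ⟨_, biproduct.lift (fun i => b i),
      fun w => ⟨biproduct.desc (fun i => b.repr w i • 𝟙 E), ?_⟩⟩
    rw [biproduct.lift_desc]
    simp only [Linear.comp_smul, Category.comp_id]
    exact b.sum_repr w
  have rightApprox : ∀ Y : C, ∃ (n : ℕ) (g : (⨁ fun _ : Fin n => E) ⟶ Y),
      ∀ w : E ⟶ Y, ∃ v : E ⟶ ⨁ fun _ : Fin n => E, v ≫ g = w := by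
    intro Y
    have : FiniteDimensional k (E ⟶ Y) := hfinHom E Y
    let b := Module.finBasis k (E ⟶ Y)
    refine ⟨_, biproduct.desc (fun i => b i),
      fun w => ⟨biproduct.lift (fun i => b.repr w i • 𝟙 E), ?_⟩⟩
    rw [biproduct.lift_desc]
    simp only [Linear.smul_comp, Category.id_comp]
    exact b.sum_repr w
  -- a map to a biproduct with the approximation property is `add E`-monic
  have smonic_of_approx : ∀ {X : C} {n : ℕ} {f : X ⟶ ⨁ fun _ : Fin n => E},
      (∀ w : X ⟶ E, ∃ e, f ≫ e = w) →
      SMonicT {X : C | ∃ (n : ℕ) (s : X ⟶ ⨁ (fun _ : Fin n => E))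
        (r : (⨁ fun _ : Fin n => E) ⟶ X), s ≫ r = 𝟙 X} f := by
    rintro X n f hf D' ⟨m, s, r, hsr⟩ u
    choose e he using fun i => hf (u ≫ s ≫ biproduct.π (fun _ : Fin m => E) i)
    refine ⟨biproduct.lift e ≫ r, ?_⟩
    have h1 : f ≫ biproduct.lift e = u ≫ s := by
      apply biproduct.hom_ext
      intro j
      simp only [Category.assoc, biproduct.lift_π]
      exact he j
    rw [← Category.assoc, h1, Category.assoc, hsr, Category.comp_id]
  -- vanishing transfers to negative shifts
  have hShiftNegZero : ∀ {Y T : C}, (∀ u : Y ⟶ T⟦(1 : ℤ)⟧, u = 0) →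
      ∀ w : Y⟦(-1 : ℤ)⟧ ⟶ T, w = 0 := by
    intro Y T h w
    have κ : (Y⟦(-1 : ℤ)⟧)⟦(1 : ℤ)⟧ ≅ Y := (shiftFunctorCompIsoId C (-1 : ℤ) (1 : ℤ) (by ring)).app Y
    have h1 : κ.inv ≫ w⟦(1 : ℤ)⟧' = 0 := h _
    have h2 : w⟦(1 : ℤ)⟧' = 0 := by
      calc w⟦(1 : ℤ)⟧' = κ.hom ≫ (κ.inv ≫ w⟦(1 : ℤ)⟧') := by rw [Iso.hom_inv_id_assoc]
      _ = 0 := by rw [h1, comp_zero]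
    exact (shiftFunctor C (1 : ℤ)).map_injective (by rw [h2, Functor.map_zero])
  constructor
  · -- muInvT = 𝒳
    apply Set.eq_of_subset_of_subset
    · rintro Y (hY | ⟨X, D, f, g, h, hT, hX, hD, hMo, _⟩)
      · exact fun v => hED1 hY v
      · intro v
        apply hcy0 (fun u => ?_) v
        -- every `u : Y ⟶ E⟦1⟧` vanishes
        have hu : (Triangle.mk f g h).mor₂ ≫ u = 0 := hDE1 hD _
        obtain ⟨w, hw⟩ := Triangle.yoneda_exact₃ _ hT u hu
        obtain ⟨w', hw'⟩ := (shiftFunctor C (1 : ℤ)).map_surjective w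
        obtain ⟨e, he⟩ := hMo E hED w'
        rw [hw, ← hw', ← he]
        change h ≫ (f ≫ e)⟦(1 : ℤ)⟧' = 0
        rw [Functor.map_comp]
        have hz := comp_distTriang_mor_zero₃₁ _ hT
        change h ≫ f⟦(1 : ℤ)⟧' = 0 at hz
        rw [← Category.assoc, hz, zero_comp]
    · intro Y hY
      obtain ⟨n, g, hg⟩ := rightApprox Y
      obtain ⟨Z, h₀, k₀, hT₀⟩ := distinguished_cocone_triangle g
      have hT : (Triangle.mk g h₀ k₀).invRotate ∈ distTriang C := inv_rot_of_distTriang _ hT₀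
      set T := (Triangle.mk g h₀ k₀).invRotate with hTdef
      -- maps `E ⟶ Z` vanish
      have hZ : ∀ w : E ⟶ Z, w = 0 := by
        intro w
        have hw : w ≫ (Triangle.mk g h₀ k₀).mor₃ = 0 := hED1 (hDD n) _
        obtain ⟨w', hw'⟩ := Triangle.coyoneda_exact₃ _ hT₀ w hw
        obtain ⟨v, hv⟩ := hg w'
        rw [hw', ← hv]
        change (v ≫ g) ≫ h₀ = 0
        rw [Category.assoc]
        have hz := comp_distTriang_mor_zero₁₂ _ hT₀
        change g ≫ h₀ = 0 at hz
        rw [hz, comp_zero]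
      -- maps `E ⟶ T.obj₁⟦1⟧` vanish
      have hX1 : ∀ v : E ⟶ T.obj₁⟦(1 : ℤ)⟧, v = 0 := by
        intro v
        have κ : (T.obj₁)⟦(1 : ℤ)⟧ ≅ Z :=
          (shiftFunctorCompIsoId C (-1 : ℤ) (1 : ℤ) (by ring)).app Z
        have h1 : v ≫ κ.hom = 0 := hZ _
        calc v = (v ≫ κ.hom) ≫ κ.inv := by rw [Category.assoc, Iso.hom_inv_id, Category.comp_id]
        _ = 0 := by rw [h1, zero_comp]
      right
      refine ⟨T.obj₁, ⨁ fun _ : Fin n => E, T.mor₁, T.mor₂, T.mor₃, hT, hX1, hDD n, ?_, ?_⟩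
      · -- SMonic
        apply smonic_of_approx
        intro w
        have hT' : T.invRotate ∈ distTriang C := inv_rot_of_distTriang _ hT
        have h0 : T.invRotate.mor₁ ≫ w = 0 := hShiftNegZero (hcy0 hY) _
        obtain ⟨e, he⟩ := Triangle.yoneda_exact₂ _ hT' w h0
        exact ⟨e, he.symm⟩
      · -- SEpic
        intro D' hD' u
        have h0 : u ≫ T.mor₃ = 0 := hfromD hX1 hD' _
        obtain ⟨v, hv⟩ := Triangle.coyoneda_exact₃ _ hT u h0
        exact ⟨v, hv.symm⟩
  · -- muT = 𝒳
    apply Set.eq_of_subset_of_subset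
    · rintro X (hX | ⟨D, Y, f, g, h, hT, hD, _, _, hEp⟩)
      · exact fun v => hED1 hX v
      · intro v
        have hv : v ≫ (Triangle.mk f g h).mor₁⟦(1 : ℤ)⟧' = 0 := by
          apply hED1 hD
        obtain ⟨w, hw⟩ := Triangle.coyoneda_exact₁ _ hT v hv
        obtain ⟨w', hw'⟩ := hEp E hED w
        rw [hw, ← hw']
        change (w' ≫ g) ≫ h = 0
        rw [Category.assoc]
        have hz := comp_distTriang_mor_zero₂₃ _ hT
        change g ≫ h = 0 at hz
        rw [hz, comp_zero]
    · intro X hX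
      obtain ⟨n, f, hf⟩ := leftApprox X
      obtain ⟨Y, g, h, hT⟩ := distinguished_cocone_triangle f
      have hY : ∀ v : E ⟶ Y⟦(1 : ℤ)⟧, v = 0 := by
        apply hcy0
        intro u
        have hu : (Triangle.mk f g h).mor₂ ≫ u = 0 := hDE1 (hDD n) _
        obtain ⟨w, hw⟩ := Triangle.yoneda_exact₃ _ hT u hu
        obtain ⟨w', hw'⟩ := (shiftFunctor C (1 : ℤ)).map_surjective w
        obtain ⟨e, he⟩ := hf w'
        rw [hw, ← hw', ← he]
        change h ≫ (f ≫ e)⟦(1 : ℤ)⟧' = 0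
        rw [Functor.map_comp]
        have hz := comp_distTriang_mor_zero₃₁ _ hT
        change h ≫ f⟦(1 : ℤ)⟧' = 0 at hz
        rw [← Category.assoc, hz, zero_comp]
      right
      refine ⟨⨁ fun _ : Fin n => E, Y, f, g, h, hT, hDD n, hY, smonic_of_approx hf, ?_⟩
      intro D' hD' u
      have h0 : u ≫ (Triangle.mk f g h).mor₃ = 0 := hfromD hX hD' _
      obtain ⟨v, hv⟩ := Triangle.coyoneda_exact₃ _ hT u h0
      exact ⟨v, hv.symm⟩
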